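/- For any weak composition α of length n and any weak composition γ of length n with α ⪯ γ, there exists a unique maximal β (with respect to ⪯) such that α ⪯⁰ β and β ⪯ γ. -/

import Mathlib

/-- A single left swap: `α` is obtained from `β` by exchanging two parts
`β r < β s` with `r < s`. -/
def LeftSwapStep {n : ℕ} (β α : Fin n → ℕ) : Prop :=
  ∃ r s : Fin n, r < s ∧ β r < β s ∧ α = fun i => β (Equiv.swap r s i)

/-- `α ⪯ β`: `α` is obtained from `β` by a (possibly empty) sequence of left swaps. -/
def LSwapLE {n : ℕ} (α β : Fin n → ℕ) : Prop :=
  Relation.ReflTransGen LeftSwapStep β α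

/-- A single pinned left swap: exchanging two *nonzero* parts `0 < β i < β j`
with `i < j`. -/
def PinnedSwapStep {n : ℕ} (β α : Fin n → ℕ) : Prop :=
  ∃ i j : Fin n, i < j ∧ 0 < β i ∧ β i < β j ∧ α = fun l => β (Equiv.swap i j l)

/-- `α ⪯⁰ β`: reflexive-transitive closure of pinned left swaps. -/
def PinnedSwapLE {n : ℕ} (α β : Fin n → ℕ) : Prop :=
  Relation.ReflTransGen PinnedSwapStep β α

open Finset

namespace MaxPinned


/-- number of positions `l` with `a ≤ l < b` and `x l ≥ t`. -/
def cntIn {n : ℕ} (x : Fin n → ℕ) (a b t : ℕ) : ℕ :=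
  ∑ i : Fin n, if a ≤ (i : ℕ) ∧ (i : ℕ) < b ∧ t ≤ x i then 1 else 0

lemma cntIn_split {n : ℕ} (x : Fin n → ℕ) {a b c : ℕ} (hab : a ≤ b) (hbc : b ≤ c) (t : ℕ) :
    cntIn x a c t = cntIn x a b t + cntIn x b c t := by
  unfold cntIn
  rw [← Finset.sum_add_distrib]
  refine Finset.sum_congr rfl fun i _ => ?_
  split_ifs <;> omega

lemma cntIn_mono_comp {n : ℕ} {x y : Fin n → ℕ} {a b t a' b' t' : ℕ}
    (h : ∀ l : Fin n, a ≤ (l:ℕ) → (l:ℕ) < b → t ≤ x l → (a' ≤ (l:ℕ) ∧ (l:ℕ) < b' ∧ t' ≤ y l)) :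
    cntIn x a b t ≤ cntIn y a' b' t' := by
  unfold cntIn
  refine Finset.sum_le_sum fun i _ => ?_
  split_ifs with h1 h2
  · rfl
  · exact absurd (h i h1.1 h1.2.1 h1.2.2) h2
  · omega
  · rfl

lemma cntIn_congr {n : ℕ} {x y : Fin n → ℕ} {a b t : ℕ}
    (h : ∀ l : Fin n, a ≤ (l:ℕ) → (l:ℕ) < b → x l = y l) :
    cntIn x a b t = cntIn y a b t := by
  unfold cntIn
  refine Finset.sum_congr rfl fun i _ => ?_
  by_cases h1 : a ≤ (i:ℕ) ∧ (i:ℕ) < b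
  · rw [h i h1.1 h1.2]
  · split_ifs <;> omega

lemma cntIn_single {n : ℕ} (x : Fin n → ℕ) {a : ℕ} (h : a < n) (t : ℕ) :
    cntIn x a (a+1) t = if t ≤ x ⟨a, h⟩ then 1 else 0 := by
  unfold cntIn
  rw [Finset.sum_eq_single ⟨a, h⟩]
  · simp
  · intro b _ hb
    have : (b : ℕ) ≠ a := fun hc => hb (Fin.ext hc)
    split_ifs <;> omega
  · simp

lemma cntIn_eq_zero {n : ℕ} (x : Fin n → ℕ) {a b : ℕ} (h : b ≤ a) (t : ℕ) :
    cntIn x a b t = 0 := by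
  unfold cntIn
  refine Finset.sum_eq_zero fun i _ => ?_
  split_ifs <;> omega

lemma cntIn_stable {n : ℕ} (x : Fin n → ℕ) {a b : ℕ} (h : n ≤ b) (t : ℕ) :
    cntIn x a b t = cntIn x a n t := by
  unfold cntIn
  refine Finset.sum_congr rfl fun i _ => ?_
  have := i.isLt
  split_ifs <;> omega

lemma cntIn_eq_card {n : ℕ} (x : Fin n → ℕ) (a b t : ℕ) :
    cntIn x a b t = (univ.filter fun i : Fin n => a ≤ (i:ℕ) ∧ (i:ℕ) < b ∧ t ≤ x i).card := by
  unfold cntIn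
  rw [Finset.card_filter]

lemma cntIn_le_len {n : ℕ} (x : Fin n → ℕ) {a b : ℕ} (hab : a ≤ b) (t : ℕ) :
    cntIn x a b t ≤ b - a := by
  rw [cntIn_eq_card]
  calc (univ.filter fun i : Fin n => a ≤ (i:ℕ) ∧ (i:ℕ) < b ∧ t ≤ x i).card
      ≤ (Finset.Ico a b).card := by
        refine Finset.card_le_card_of_injOn (fun i : Fin n => (i : ℕ)) ?_ ?_
        · intro i hi
          simp only [Finset.mem_coe, Finset.mem_filter] at hi
          simp only [Finset.mem_coe, Finset.mem_Ico]
          omega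
        · intro i _ j _ hij; exact Fin.ext hij
    _ = b - a := Nat.card_Ico a b

lemma cntIn_zero_left {n : ℕ} (x : Fin n → ℕ) (k t : ℕ) :
    cntIn x 0 k t = ∑ i : Fin n, if (i : ℕ) < k ∧ t ≤ x i then 1 else 0 := by
  unfold cntIn
  refine Finset.sum_congr rfl fun i _ => ?_
  simp

/-- the fundamental swap computation. -/
lemma cntIn_swap {n : ℕ} (x : Fin n → ℕ) (r s : Fin n) (hrs : r ≠ s) (k t : ℕ) :
    cntIn (fun l => x (Equiv.swap r s l)) 0 k t
      + (if (r:ℕ) < k ∧ t ≤ x r then 1 else 0) + (if (s:ℕ) < k ∧ t ≤ x s then 1 else 0)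
    = cntIn x 0 k t
      + (if (s:ℕ) < k ∧ t ≤ x r then 1 else 0) + (if (r:ℕ) < k ∧ t ≤ x s then 1 else 0) := by
  have key : cntIn (fun l => x (Equiv.swap r s l)) 0 k t
      = ∑ j : Fin n, if ((Equiv.swap r s j : Fin n) : ℕ) < k ∧ t ≤ x j then 1 else 0 := by
    rw [cntIn_zero_left]
    rw [← Equiv.sum_comp (Equiv.swap r s)
      (fun j => if ((Equiv.swap r s j : Fin n) : ℕ) < k ∧ t ≤ x j then 1 else 0)]
    refine Finset.sum_congr rfl fun i _ => ?_
    rw [Equiv.swap_apply_self]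
  rw [key, cntIn_zero_left]
  have dec : ∀ f : Fin n → ℕ, ∑ j : Fin n, f j = f r + f s + ∑ j ∈ (univ.erase r).erase s, f j := by
    intro f
    rw [← Finset.add_sum_erase _ f (mem_univ r), add_assoc,
      ← Finset.add_sum_erase _ f (by simp [hrs.symm] : s ∈ univ.erase r)]
  rw [dec, dec (fun j => if (j:ℕ) < k ∧ t ≤ x j then 1 else 0)]
  have tail : ∑ j ∈ (univ.erase r).erase s,
        (if ((Equiv.swap r s j : Fin n) : ℕ) < k ∧ t ≤ x j then 1 else 0)
      = ∑ j ∈ (univ.erase r).erase s, (if (j:ℕ) < k ∧ t ≤ x j then 1 else 0) := by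
    refine Finset.sum_congr rfl fun j hj => ?_
    have hjs : j ≠ s := (Finset.mem_erase.1 hj).1
    have hjr : j ≠ r := (Finset.mem_erase.1 (Finset.mem_erase.1 hj).2).1
    rw [Equiv.swap_apply_of_ne_of_ne hjr hjs]
  rw [tail, Equiv.swap_apply_left, Equiv.swap_apply_right]
  omega




section Swaps
variable {n : ℕ}

-- from part1 (assumed): cntIn, cntIn_swap etc.

/-- after a swap with `r < s`, `x r < x s`, counts only grow. -/
lemma cnt_swap_mono (x : Fin n → ℕ) {r s : Fin n} (hrs : r < s) (hv : x r ≤ x s) (k t : ℕ) :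
    cntIn x 0 k t ≤ cntIn (fun l => x (Equiv.swap r s l)) 0 k t := by
  have h := cntIn_swap x r s (Fin.ne_of_lt hrs) k t
  have hrs' : (r : ℕ) < (s : ℕ) := hrs
  split_ifs at h <;> omega

lemma cnt_swap_outside (x : Fin n → ℕ) {r s : Fin n} (hrs : r < s) {k : ℕ}
    (hk : k ≤ (r : ℕ) ∨ (s : ℕ) < k) (t : ℕ) :
    cntIn (fun l => x (Equiv.swap r s l)) 0 k t = cntIn x 0 k t := by
  have h := cntIn_swap x r s (Fin.ne_of_lt hrs) k t
  have hrs' : (r : ℕ) < (s : ℕ) := hrs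
  split_ifs at h <;> omega

lemma cnt_swap_window (x : Fin n → ℕ) {r s : Fin n} (hrs : r < s) {k : ℕ}
    (hk1 : (r : ℕ) < k) (hk2 : k ≤ (s : ℕ)) (t : ℕ) :
    cntIn (fun l => x (Equiv.swap r s l)) 0 k t + (if t ≤ x r then 1 else 0)
      = cntIn x 0 k t + (if t ≤ x s then 1 else 0) := by
  have h := cntIn_swap x r s (Fin.ne_of_lt hrs) k t
  have hrs' : (r : ℕ) < (s : ℕ) := hrs
  split_ifs at h <;> split_ifs <;> omega

end Swaps

section Necessity
variable {n : ℕ}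

lemma lswaple_dom {x y : Fin n → ℕ} (h : LSwapLE x y) :
    ∀ k t, cntIn y 0 k t ≤ cntIn x 0 k t := by
  induction h with
  | refl => intro k t; exact le_rfl
  | tail _ hstep ih =>
      rename_i b c _
      obtain ⟨r, s, hrs, hv, rfl⟩ := hstep
      intro k t
      exact le_trans (ih k t) (cnt_swap_mono b hrs hv.le k t)

lemma lswaple_eqc {x y : Fin n → ℕ} (h : LSwapLE x y) :
    ∀ t, cntIn y 0 n t = cntIn x 0 n t := by
  induction h with
  | refl => intro t; rfl
  | tail _ hstep ih =>
      rename_i b c _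
      obtain ⟨r, s, hrs, hv, rfl⟩ := hstep
      intro t
      rw [ih t]
      have := cnt_swap_outside b hrs (k := n) (Or.inr s.isLt) t
      omega

lemma pinned_le_lswaple {x y : Fin n → ℕ} (h : PinnedSwapLE x y) : LSwapLE x y := by
  induction h with
  | refl => exact Relation.ReflTransGen.refl
  | tail hab hstep ih =>
      obtain ⟨r, s, hrs, hpos, hv, rfl⟩ := hstep
      exact Relation.ReflTransGen.tail ih ⟨r, s, hrs, hv, rfl⟩

lemma pinned_le_supp {x y : Fin n → ℕ} (h : PinnedSwapLE x y) :
    ∀ i, x i = 0 ↔ y i = 0 := by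
  induction h with
  | refl => intro i; rfl
  | tail _ hstep ih =>
      rename_i b c _
      obtain ⟨r, s, hrs, hpos, hv, rfl⟩ := hstep
      intro i
      rw [← ih i]
      rcases eq_or_ne i r with rfl | hir
      · simp only [Equiv.swap_apply_left]; omega
      rcases eq_or_ne i s with rfl | his
      · simp only [Equiv.swap_apply_right]; omega
      · simp only [Equiv.swap_apply_of_ne_of_ne hir his]

/-- potential for antisymmetry -/
def pot {n : ℕ} (x : Fin n → ℕ) : ℕ := ∑ i : Fin n, (i : ℕ) * x i

lemma pot_step {x y : Fin n → ℕ} (h : LeftSwapStep x y) : pot y < pot x := by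
  obtain ⟨r, s, hrs, hv, rfl⟩ := h
  unfold pot
  have dec : ∀ f : Fin n → ℕ, ∑ j : Fin n, f j = f r + f s + ∑ j ∈ (univ.erase r).erase s, f j := by
    intro f
    rw [← Finset.add_sum_erase _ f (mem_univ r), add_assoc,
      ← Finset.add_sum_erase _ f (by simp [(Fin.ne_of_lt hrs).symm] : s ∈ univ.erase r)]
  rw [dec (fun i => (i:ℕ) * x (Equiv.swap r s i)), dec (fun i => (i:ℕ) * x i)]
  have tail : ∑ j ∈ (univ.erase r).erase s, (j:ℕ) * x (Equiv.swap r s j)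
      = ∑ j ∈ (univ.erase r).erase s, (j:ℕ) * x j := by
    refine Finset.sum_congr rfl fun j hj => ?_
    have hjs : j ≠ s := (Finset.mem_erase.1 hj).1
    have hjr : j ≠ r := (Finset.mem_erase.1 (Finset.mem_erase.1 hj).2).1
    rw [Equiv.swap_apply_of_ne_of_ne hjr hjs]
  rw [tail, Equiv.swap_apply_left, Equiv.swap_apply_right]
  have hrs' : (r:ℕ) < (s:ℕ) := hrs
  have key : (r:ℕ) * x s + (s:ℕ) * x r < (r:ℕ) * x r + (s:ℕ) * x s := by
    nlinarith [Nat.sub_pos_of_lt hrs', Nat.sub_pos_of_lt hv]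
  omega

lemma lswaple_pot {x y : Fin n → ℕ} (h : LSwapLE x y) : pot x ≤ pot y := by
  induction h with
  | refl => exact le_rfl
  | tail _ hstep ih => exact le_trans (le_of_lt (pot_step hstep)) ih

lemma lswaple_antisymm {x y : Fin n → ℕ} (h1 : LSwapLE x y) (h2 : LSwapLE y x) : x = y := by
  rcases Relation.ReflTransGen.cases_head h1 with heq | ⟨z, hstep, htail⟩
  · exact heq.symm
  · have h3 : pot x ≤ pot z := lswaple_pot htail
    have h4 : pot z < pot y := pot_step hstep
    have h5 : pot y ≤ pot x := lswaple_pot h2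
    omega

end Necessity



variable {n : ℕ}

lemma cnt_succ (z : Fin n → ℕ) (i : Fin n) (t : ℕ) :
    cntIn z 0 ((i:ℕ)+1) t = cntIn z 0 i t + if t ≤ z i then 1 else 0 := by
  rw [cntIn_split z (Nat.zero_le _) (Nat.le_succ _) t, cntIn_single z i.isLt t, Fin.eta]

/-- the master exchange step. -/
lemma master {x y : Fin n → ℕ}
    (hEq : ∀ t, 1 ≤ t → cntIn x 0 n t = cntIn y 0 n t)
    (hDom : ∀ k t, 1 ≤ t → cntIn y 0 k t ≤ cntIn x 0 k t)
    (hne : x ≠ y) :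
    ∃ i j : Fin n, i < j ∧ y i < y j ∧ y j ≤ x i ∧ y i < x i ∧
      (∀ k t, 1 ≤ t → cntIn (fun l => y (Equiv.swap i j l)) 0 k t ≤ cntIn x 0 k t) ∧
      cntIn y 0 ((i:ℕ)+1) (y j) < cntIn (fun l => y (Equiv.swap i j l)) 0 ((i:ℕ)+1) (y j) := by
  classical
  -- the first difference i
  have hD : (univ.filter fun l : Fin n => x l ≠ y l).Nonempty := by
    by_contra hcon
    rw [Finset.not_nonempty_iff_eq_empty, Finset.filter_eq_empty_iff] at hcon
    exact hne (funext fun l => not_ne_iff.1 (hcon (mem_univ l)))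
  set D := univ.filter fun l : Fin n => x l ≠ y l with hDdef
  set i := D.min' hD with hidef
  have hiD : x i ≠ y i := (Finset.mem_filter.1 (D.min'_mem hD)).2
  have prefix_eq : ∀ l : Fin n, (l:ℕ) < (i:ℕ) → x l = y l := by
    intro l hl
    by_contra hxl
    have : i ≤ l := D.min'_le l (Finset.mem_filter.2 ⟨mem_univ l, hxl⟩)
    exact absurd hl (by omega)
  have hpre : ∀ m : ℕ, m ≤ (i:ℕ) → ∀ t, cntIn x 0 m t = cntIn y 0 m t := by
    intro m hm t
    exact cntIn_congr fun l _ hl => prefix_eq l (by omega)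
  clear_value i
  -- y i < x i
  have hyx : y i < x i := by
    have h1 := hDom ((i:ℕ)+1) (x i + 1) (by omega)
    rw [cnt_succ y i, cnt_succ x i, hpre (i:ℕ) le_rfl (x i + 1)] at h1
    split_ifs at h1 <;> omega
  -- existence of a later position of y with value x i
  have hex : ∃ l : Fin n, (i:ℕ) < (l:ℕ) ∧ y i < y l ∧ y l ≤ x i := by
    set v := x i with hvdef
    have hv1 : 1 ≤ v := by omega
    have hsplit : ∀ z : Fin n → ℕ, ∀ t, cntIn z 0 n t = cntIn z 0 i t + cntIn z i n t :=
      fun z t => cntIn_split z (Nat.zero_le _) i.isLt.le t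
    have hAx : cntIn x i n v = cntIn y i n v := by
      have := hEq v hv1
      rw [hsplit x v, hsplit y v, hpre (i:ℕ) le_rfl v] at this
      omega
    have hBx : cntIn x i n (v+1) = cntIn y i n (v+1) := by
      have := hEq (v+1) (by omega)
      rw [hsplit x (v+1), hsplit y (v+1), hpre (i:ℕ) le_rfl (v+1)] at this
      omega
    have hC : ∀ z : Fin n → ℕ, cntIn z i n v
        = cntIn z i n (v+1) + ∑ l : Fin n, (if (i:ℕ) ≤ (l:ℕ) ∧ z l = v then 1 else 0) := by
      intro z
      unfold cntIn
      rw [← Finset.sum_add_distrib]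
      refine Finset.sum_congr rfl fun l _ => ?_
      have := l.isLt
      split_ifs <;> omega
    have hCx1 : 1 ≤ ∑ l : Fin n, (if (i:ℕ) ≤ (l:ℕ) ∧ x l = v then 1 else 0) := by
      have h0 : (if (i:ℕ) ≤ (i:ℕ) ∧ x i = v then 1 else 0) = 1 := by simp [hvdef]
      calc 1 = (if (i:ℕ) ≤ (i:ℕ) ∧ x i = v then 1 else 0) := h0.symm
        _ ≤ _ := Finset.single_le_sum
            (f := fun l : Fin n => if (i:ℕ) ≤ (l:ℕ) ∧ x l = v then 1 else 0)
            (fun l _ => Nat.zero_le _) (mem_univ i)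
    have hCy1 : 1 ≤ ∑ l : Fin n, (if (i:ℕ) ≤ (l:ℕ) ∧ y l = v then 1 else 0) := by
      have h1 := hC x; have h2 := hC y
      omega
    have : ∃ l : Fin n, (i:ℕ) ≤ (l:ℕ) ∧ y l = v := by
      by_contra hcon
      push_neg at hcon
      have : ∑ l : Fin n, (if (i:ℕ) ≤ (l:ℕ) ∧ y l = v then 1 else 0) = 0 := by
        refine Finset.sum_eq_zero fun l _ => ?_
        by_cases h : (i:ℕ) ≤ (l:ℕ)
        · simp [hcon l h]
        · simp [h]
      omega
    obtain ⟨l, hl1, hl2⟩ := this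
    have hli : l ≠ i := by
      intro h
      rw [h] at hl2
      exact hiD hl2.symm
    have : (i:ℕ) < (l:ℕ) := by
      rcases Nat.lt_or_ge (i:ℕ) (l:ℕ) with h | h
      · exact h
      · exact absurd (Fin.ext (by omega) : l = i) hli
    exact ⟨l, this, by omega, by omega⟩
  -- the minimal such j
  have hJ : (univ.filter fun l : Fin n => (i:ℕ) < (l:ℕ) ∧ y i < y l ∧ y l ≤ x i).Nonempty := by
    obtain ⟨l, h1, h2, h3⟩ := hex
    exact ⟨l, Finset.mem_filter.2 ⟨mem_univ l, h1, h2, h3⟩⟩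
  set J := univ.filter fun l : Fin n => (i:ℕ) < (l:ℕ) ∧ y i < y l ∧ y l ≤ x i with hJdef
  set j := J.min' hJ with hjdef
  have hjmem := Finset.mem_filter.1 (J.min'_mem hJ)
  obtain ⟨-, hij, hyij, hyjx⟩ := hjmem
  rw [← hjdef] at hij hyij hyjx
  have hijf : i < j := hij
  have jmin : ∀ l : Fin n, (i:ℕ) < (l:ℕ) → (l:ℕ) < (j:ℕ) → ¬(y i < y l ∧ y l ≤ x i) := by
    intro l h1 h2 hcon
    have : j ≤ l := J.min'_le l (Finset.mem_filter.2 ⟨mem_univ l, h1, hcon.1, hcon.2⟩)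
    exact absurd h2 (by omega)
  clear_value j
  refine ⟨i, j, hijf, hyij, hyjx, hyx, ?_, ?_⟩
  · -- dominance preserved
    intro k t ht
    rcases Nat.lt_or_ge (i:ℕ) k with hk1 | hk1
    swap
    · rw [cnt_swap_outside y hijf (Or.inl hk1) t]; exact hDom k t ht
    rcases Nat.lt_or_ge (j:ℕ) k with hk2 | hk2
    · rw [cnt_swap_outside y hijf (Or.inr hk2) t]; exact hDom k t ht
    -- window case i < k ≤ j
    have hwin := cnt_swap_window y hijf hk1 hk2 t
    rcases le_or_gt t (y i) with hti | hti
    · have h1 : (if t ≤ y i then 1 else 0) = 1 := if_pos hti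
      have h2 : (if t ≤ y j then 1 else 0) = 1 := if_pos (by omega)
      rw [h1, h2] at hwin
      have := hDom k t ht
      omega
    rcases Nat.lt_or_ge (y j) t with htj | htj
    · have h1 : (if t ≤ y i then 1 else 0) = 0 := if_neg (by omega)
      have h2 : (if t ≤ y j then 1 else 0) = 0 := if_neg (by omega)
      rw [h1, h2] at hwin
      have := hDom k t ht
      omega
    -- the hard case : y i < t ≤ y j
    have h1 : (if t ≤ y i then 1 else 0) = 0 := if_neg (by omega)
    have h2 : (if t ≤ y j then 1 else 0) = 1 := if_pos htj
    rw [h1, h2] at hwin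
    have goal2 : cntIn y 0 k t + 1 ≤ cntIn x 0 k t := by
      have hdec : ∀ z : Fin n → ℕ, ∀ u, cntIn z 0 k u
          = cntIn z 0 i u + (if u ≤ z i then 1 else 0) + cntIn z ((i:ℕ)+1) k u := by
        intro z u
        rw [cntIn_split z (Nat.zero_le _) (by omega : (i:ℕ)+1 ≤ k) u,
          cnt_succ z i u]
      have hxiterm : (if t ≤ x i then 1 else 0) = 1 := if_pos (by omega)
      have hyiterm : (if t ≤ y i then 1 else 0) = 0 := h1
      -- window comparison
      have w1 : cntIn y ((i:ℕ)+1) k t ≤ cntIn y ((i:ℕ)+1) k (x i + 1) := by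
        refine cntIn_mono_comp fun l hl1 hl2 hl3 => ⟨hl1, hl2, ?_⟩
        have hnl := jmin l (by omega) (by omega)
        by_contra hcon
        exact hnl ⟨by omega, by omega⟩
      have w2 : cntIn y ((i:ℕ)+1) k (x i + 1) ≤ cntIn x ((i:ℕ)+1) k (x i + 1) := by
        have hd := hDom k (x i + 1) (by omega)
        rw [hdec x (x i + 1), hdec y (x i + 1), hpre (i:ℕ) le_rfl (x i + 1)] at hd
        have e1 : (if x i + 1 ≤ x i then 1 else 0) = 0 := if_neg (by omega)
        have e2 : (if x i + 1 ≤ y i then 1 else 0) = 0 := if_neg (by omega)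
        rw [e1, e2] at hd
        omega
      have w3 : cntIn x ((i:ℕ)+1) k (x i + 1) ≤ cntIn x ((i:ℕ)+1) k t := by
        refine cntIn_mono_comp fun l hl1 hl2 hl3 => ⟨hl1, hl2, by omega⟩
      have := hpre (i:ℕ) le_rfl t
      rw [hdec x t, hdec y t, hxiterm, hyiterm]
      omega
    omega
  · -- strict progress at (i+1, y j)
    have e1 : cntIn (fun l => y (Equiv.swap i j l)) 0 ((i:ℕ)+1) (y j)
        = cntIn (fun l => y (Equiv.swap i j l)) 0 (i:ℕ) (y j)
          + (if y j ≤ y j then 1 else 0) := by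
      have := cnt_succ (fun l => y (Equiv.swap i j l)) i (y j)
      simpa [Equiv.swap_apply_left] using this
    have e2 : cntIn (fun l => y (Equiv.swap i j l)) 0 (i:ℕ) (y j) = cntIn y 0 (i:ℕ) (y j) :=
      cnt_swap_outside y hijf (Or.inl le_rfl) (y j)
    have e3 := cnt_succ y i (y j)
    have e4 : (if y j ≤ y i then 1 else 0) = 0 := if_neg (by omega)
    rw [e4] at e3
    simp only [le_refl, if_true] at e1
    omega


variable {n : ℕ}

def Phi (x y : Fin n → ℕ) (T : ℕ) : ℕ :=
  ∑ p ∈ Finset.range (n+1) ×ˢ Finset.Icc 1 T, (cntIn x 0 p.1 p.2 - cntIn y 0 p.1 p.2)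

lemma phi_lt {x y y' : Fin n → ℕ} {T : ℕ}
    (hmono : ∀ k t, cntIn y 0 k t ≤ cntIn y' 0 k t)
    (hud : ∀ k t, 1 ≤ t → cntIn y' 0 k t ≤ cntIn x 0 k t)
    {k₀ t₀ : ℕ} (hk₀ : k₀ ≤ n) (ht₀1 : 1 ≤ t₀) (ht₀T : t₀ ≤ T)
    (hstrict : cntIn y 0 k₀ t₀ < cntIn y' 0 k₀ t₀) :
    Phi x y' T < Phi x y T := by
  refine Finset.sum_lt_sum (fun p hp => ?_) ⟨(k₀, t₀), ?_, ?_⟩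
  · exact Nat.sub_le_sub_left (hmono p.1 p.2) _
  · rw [Finset.mem_product]
    exact ⟨Finset.mem_range.2 (by omega), Finset.mem_Icc.2 ⟨ht₀1, ht₀T⟩⟩
  · have := hud k₀ t₀ ht₀1
    simp only
    omega

lemma suffL {x y : Fin n → ℕ}
    (hEq : ∀ t, 1 ≤ t → cntIn x 0 n t = cntIn y 0 n t)
    (hDom : ∀ k t, 1 ≤ t → cntIn y 0 k t ≤ cntIn x 0 k t) :
    LSwapLE x y := by
  classical
  set T := univ.sup x with hT
  suffices H : ∀ m (z : Fin n → ℕ), Phi x z T = m →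
      (∀ t, 1 ≤ t → cntIn x 0 n t = cntIn z 0 n t) →
      (∀ k t, 1 ≤ t → cntIn z 0 k t ≤ cntIn x 0 k t) →
      Relation.ReflTransGen LeftSwapStep z x by
    exact H _ y rfl hEq hDom
  intro m
  induction m using Nat.strong_induction_on with
  | _ m IH =>
    intro z hm hEqz hDomz
    by_cases hxz : x = z
    · rw [hxz]
    obtain ⟨i, j, hij, hyij, hyjx, hyx, hDom', hstrict⟩ := master hEqz hDomz hxz
    set z' := fun l => z (Equiv.swap i j l) with hz'
    have hstep : LeftSwapStep z z' := ⟨i, j, hij, hyij, rfl⟩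
    have hmono : ∀ k t, cntIn z 0 k t ≤ cntIn z' 0 k t :=
      fun k t => cnt_swap_mono z hij hyij.le k t
    have hEq' : ∀ t, 1 ≤ t → cntIn x 0 n t = cntIn z' 0 n t := by
      intro t ht
      rw [hEqz t ht, cnt_swap_outside z hij (Or.inr j.isLt) t]
    have hxiT : x i ≤ T := Finset.le_sup (mem_univ i)
    have hphi : Phi x z' T < Phi x z T :=
      phi_lt hmono hDom' (by omega : (i:ℕ)+1 ≤ n) (by omega) (by omega) hstrict
    exact Relation.ReflTransGen.head hstep (IH _ (by omega) z' rfl hEq' hDom')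

lemma suffP {x y : Fin n → ℕ}
    (hEq : ∀ t, 1 ≤ t → cntIn x 0 n t = cntIn y 0 n t)
    (hDom : ∀ k t, 1 ≤ t → cntIn y 0 k t ≤ cntIn x 0 k t)
    (hsupp : ∀ l, x l = 0 ↔ y l = 0) :
    PinnedSwapLE x y := by
  classical
  set T := univ.sup x with hT
  suffices H : ∀ m (z : Fin n → ℕ), Phi x z T = m →
      (∀ t, 1 ≤ t → cntIn x 0 n t = cntIn z 0 n t) →
      (∀ k t, 1 ≤ t → cntIn z 0 k t ≤ cntIn x 0 k t) →
      (∀ l, x l = 0 ↔ z l = 0) →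
      Relation.ReflTransGen PinnedSwapStep z x by
    exact H _ y rfl hEq hDom hsupp
  intro m
  induction m using Nat.strong_induction_on with
  | _ m IH =>
    intro z hm hEqz hDomz hsuppz
    by_cases hxz : x = z
    · rw [hxz]
    obtain ⟨i, j, hij, hyij, hyjx, hyx, hDom', hstrict⟩ := master hEqz hDomz hxz
    have hzi : 0 < z i := by
      rcases Nat.eq_zero_or_pos (z i) with h0 | h0
      · have : x i = 0 := (hsuppz i).2 h0
        omega
      · exact h0
    set z' := fun l => z (Equiv.swap i j l) with hz'
    have hstep : PinnedSwapStep z z' := ⟨i, j, hij, hzi, hyij, rfl⟩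
    have hmono : ∀ k t, cntIn z 0 k t ≤ cntIn z' 0 k t :=
      fun k t => cnt_swap_mono z hij hyij.le k t
    have hEq' : ∀ t, 1 ≤ t → cntIn x 0 n t = cntIn z' 0 n t := by
      intro t ht
      rw [hEqz t ht, cnt_swap_outside z hij (Or.inr j.isLt) t]
    have hsupp' : ∀ l, x l = 0 ↔ z' l = 0 := by
      intro l
      rcases eq_or_ne l i with rfl | hli
      · have : z' l = z j := by simp only [hz', Equiv.swap_apply_left]
        rw [this]
        constructor
        · intro h; omega
        · intro h; omega
      rcases eq_or_ne l j with rfl | hlj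
      · have : z' l = z i := by simp only [hz', Equiv.swap_apply_right]
        rw [this]
        have hxj := hsuppz l
        constructor
        · intro h; omega
        · intro h; omega
      · have : z' l = z l := by simp only [hz', Equiv.swap_apply_of_ne_of_ne hli hlj]
        rw [this]; exact hsuppz l
    have hxiT : x i ≤ T := Finset.le_sup (mem_univ i)
    have hphi : Phi x z' T < Phi x z T :=
      phi_lt hmono hDom' (by omega : (i:ℕ)+1 ≤ n) (by omega) (by omega) hstrict
    exact Relation.ReflTransGen.head hstep (IH _ (by omega) z' rfl hEq' hDom' hsupp')


variable {n : ℕ}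

/-- count of value-differences, monotone rectangle inequality. -/
lemma cnt_tdiff (z : Fin n → ℕ) {k k₀ t t' : ℕ} (hk : k ≤ k₀) (ht : t' ≤ t) :
    cntIn z 0 k t' + cntIn z 0 k₀ t ≤ cntIn z 0 k t + cntIn z 0 k₀ t' := by
  unfold cntIn
  rw [← Finset.sum_add_distrib, ← Finset.sum_add_distrib]
  refine Finset.sum_le_sum fun i _ => ?_
  split_ifs <;> omega

/-- the minimal count profile. -/
def fz (α γ : Fin n → ℕ) (k t : ℕ) : ℤ :=
  if h : k ≤ n then
    (Finset.Icc k n).sup' (Finset.nonempty_Icc.2 h)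
      (fun k' => (cntIn γ 0 k' t : ℤ) - (cntIn α k k' 1 : ℤ))
  else 0

section FZ
variable (α γ : Fin n → ℕ)

lemma fz_pos_def {k : ℕ} (h : k ≤ n) (t : ℕ) :
    fz α γ k t = (Finset.Icc k n).sup' (Finset.nonempty_Icc.2 h)
      (fun k' => (cntIn γ 0 k' t : ℤ) - (cntIn α k k' 1 : ℤ)) := dif_pos h

lemma fz_ge {k k' : ℕ} (hk : k ≤ k') (hk' : k' ≤ n) (t : ℕ) :
    (cntIn γ 0 k' t : ℤ) - (cntIn α k k' 1 : ℤ) ≤ fz α γ k t := by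
  rw [fz_pos_def α γ (le_trans hk hk')]
  exact Finset.le_sup' (fun k'' => (cntIn γ 0 k'' t : ℤ) - (cntIn α k k'' 1 : ℤ))
    (Finset.mem_Icc.2 ⟨hk, hk'⟩)

lemma fz_le {k : ℕ} (hk : k ≤ n) {t : ℕ} {M : ℤ}
    (h : ∀ k', k ≤ k' → k' ≤ n → (cntIn γ 0 k' t : ℤ) - (cntIn α k k' 1 : ℤ) ≤ M) :
    fz α γ k t ≤ M := by
  rw [fz_pos_def α γ hk]
  exact Finset.sup'_le _ _ fun k' hk' =>
    h k' (Finset.mem_Icc.1 hk').1 (Finset.mem_Icc.1 hk').2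

lemma fz_exists_max {k : ℕ} (hk : k ≤ n) (t : ℕ) :
    ∃ k', k ≤ k' ∧ k' ≤ n ∧ fz α γ k t = (cntIn γ 0 k' t : ℤ) - (cntIn α k k' 1 : ℤ) := by
  rw [fz_pos_def α γ hk]
  obtain ⟨k', hmem, heq⟩ := Finset.exists_mem_eq_sup' (Finset.nonempty_Icc.2 hk)
    (fun k' => (cntIn γ 0 k' t : ℤ) - (cntIn α k k' 1 : ℤ))
  exact ⟨k', (Finset.mem_Icc.1 hmem).1, (Finset.mem_Icc.1 hmem).2, heq⟩

lemma fz_ge_c {k : ℕ} (hk : k ≤ n) (t : ℕ) : (cntIn γ 0 k t : ℤ) ≤ fz α γ k t := by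
  have := fz_ge α γ (le_refl k) hk t
  rw [cntIn_eq_zero α (le_refl k) 1] at this
  simpa using this

lemma fz_n (t : ℕ) : fz α γ n t = (cntIn γ 0 n t : ℤ) := by
  have h1 := fz_ge_c α γ (le_refl n) t
  have h2 : fz α γ n t ≤ (cntIn γ 0 n t : ℤ) := by
    refine fz_le α γ (le_refl n) fun k' hk1 hk2 => ?_
    have : k' = n := le_antisymm hk2 hk1
    subst this
    rw [cntIn_eq_zero α (le_refl k') 1]
    simp
  omega

lemma fz_mono {k : ℕ} (hk : k < n) (t : ℕ) : fz α γ k t ≤ fz α γ (k+1) t := by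
  refine fz_le α γ (by omega) fun k' hk1 hk2 => ?_
  rcases Nat.eq_or_lt_of_le hk1 with rfl | hk1'
  · calc (cntIn γ 0 k t : ℤ) - (cntIn α k k 1 : ℤ)
        ≤ (cntIn γ 0 (k+1) t : ℤ) - (cntIn α (k+1) (k+1) 1 : ℤ) := by
          rw [cntIn_eq_zero α (le_refl k) 1, cntIn_eq_zero α (le_refl (k+1)) 1]
          have : cntIn γ 0 k t ≤ cntIn γ 0 (k+1) t :=
            cntIn_mono_comp fun l h1 h2 h3 => ⟨h1, by omega, h3⟩
          push_cast
          omega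
      _ ≤ fz α γ (k+1) t := fz_ge α γ (le_refl _) (by omega) t
  · have hsplit : cntIn α k k' 1 = cntIn α k (k+1) 1 + cntIn α (k+1) k' 1 :=
      cntIn_split α (by omega) (by omega) 1
    have := fz_ge α γ (by omega : k+1 ≤ k') hk2 t
    push_cast [hsplit]
    omega

lemma fz_step {k : ℕ} (hk : k < n) (t : ℕ) :
    fz α γ (k+1) t ≤ fz α γ k t + (cntIn α k (k+1) 1 : ℤ) := by
  refine fz_le α γ (by omega) fun k' hk1 hk2 => ?_
  have hsplit : cntIn α k k' 1 = cntIn α k (k+1) 1 + cntIn α (k+1) k' 1 :=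
    cntIn_split α (by omega) (by omega) 1
  have := fz_ge α γ (by omega : k ≤ k') hk2 t
  push_cast [hsplit] at this ⊢
  omega

lemma fz_step_le_one {k : ℕ} (hk : k < n) (t : ℕ) :
    fz α γ (k+1) t ≤ fz α γ k t + 1 := by
  have h1 := fz_step α γ hk t
  have h2 : cntIn α k (k+1) 1 ≤ 1 := by
    have := cntIn_le_len α (by omega : k ≤ k+1) 1
    omega
  have h2' : (cntIn α k (k+1) 1 : ℤ) ≤ 1 := by exact_mod_cast h2
  omega

/-- downward closedness of jumps. -/
lemma fz_dc {k t t' : ℕ} (hk : k < n) (ht : t' ≤ t)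
    (hjump : fz α γ (k+1) t = fz α γ k t + 1) :
    fz α γ (k+1) t' = fz α γ k t' + 1 := by
  -- the support increment is 1
  have hstep := fz_step α γ hk t
  have heps : 1 ≤ cntIn α k (k+1) 1 := by
    rcases Nat.eq_zero_or_pos (cntIn α k (k+1) 1) with h0 | h0
    · rw [h0] at hstep
      push_cast at hstep
      omega
    · exact h0
  by_contra hne
  have hmono' := fz_mono α γ hk t'
  have hle1 := fz_step_le_one α γ hk t'
  have heq : fz α γ (k+1) t' = fz α γ k t' := by omega
  obtain ⟨k₀, hk₀1, hk₀2, hk₀eq⟩ := fz_exists_max α γ (by omega : k+1 ≤ n) t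
  obtain ⟨k₁, hk₁1, hk₁2, hk₁eq⟩ := fz_exists_max α γ (by omega : k ≤ n) t'
  have hs : cntIn α k k₀ 1 = cntIn α k (k+1) 1 + cntIn α (k+1) k₀ 1 :=
    cntIn_split α (by omega) (by omega) 1
  rcases Nat.eq_or_lt_of_le hk₁1 with rfl | hk₁'
  · -- k₁ = k
    rw [cntIn_eq_zero α (le_refl k) 1] at hk₁eq
    -- (*) : bound on the k₀-term of fz (k+1) t'
    have hstar : (cntIn γ 0 k₀ t' : ℤ) - (cntIn α (k+1) k₀ 1 : ℤ) ≤ fz α γ (k+1) t' :=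
      fz_ge α γ hk₀1 hk₀2 t'
    -- (**) rectangle
    have hrect := cnt_tdiff γ (by omega : k ≤ k₀) ht
    -- (***)
    have hgec := fz_ge_c α γ (by omega : k ≤ n) t
    push_cast at hk₁eq hstar hrect hgec hk₀eq hs ⊢
    omega
  · -- k₁ ≥ k+1
    have h1 : (cntIn γ 0 k₁ t' : ℤ) - (cntIn α (k+1) k₁ 1 : ℤ) ≤ fz α γ (k+1) t' :=
      fz_ge α γ hk₁' hk₁2 t'
    have hs1 : cntIn α k k₁ 1 = cntIn α k (k+1) 1 + cntIn α (k+1) k₁ 1 :=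
      cntIn_split α (by omega) (by omega) 1
    push_cast [hs1] at h1 hk₁eq
    omega

end FZ


variable {n : ℕ}

section FZ2
variable (α γ : Fin n → ℕ)

lemma fz_zero (hDom : ∀ k t, 1 ≤ t → cntIn γ 0 k t ≤ cntIn α 0 k t)
    {t : ℕ} (ht : 1 ≤ t) : fz α γ 0 t = 0 := by
  have h1 := fz_ge_c α γ (Nat.zero_le n) t
  rw [cntIn_eq_zero γ (le_refl 0) t] at h1
  have h2 : fz α γ 0 t ≤ 0 := by
    refine fz_le α γ (Nat.zero_le n) fun k' hk1 hk2 => ?_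
    have ha : cntIn γ 0 k' t ≤ cntIn α 0 k' t := hDom k' t ht
    have hb : cntIn α 0 k' t ≤ cntIn α 0 k' 1 :=
      cntIn_mono_comp fun l h1 h2 h3 => ⟨h1, h2, by omega⟩
    push_cast
    omega
  omega

lemma fz_le_alpha (hDom : ∀ k t, 1 ≤ t → cntIn γ 0 k t ≤ cntIn α 0 k t)
    {k t : ℕ} (hk : k ≤ n) (ht : 1 ≤ t) : fz α γ k t ≤ (cntIn α 0 k t : ℤ) := by
  refine fz_le α γ hk fun k' hk1 hk2 => ?_
  have ha : cntIn γ 0 k' t ≤ cntIn α 0 k' t := hDom k' t ht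
  have hb : cntIn α 0 k' t = cntIn α 0 k t + cntIn α k k' t := cntIn_split α (Nat.zero_le _) hk1 t
  have hc : cntIn α k k' t ≤ cntIn α k k' 1 :=
    cntIn_mono_comp fun l h1 h2 h3 => ⟨h1, h2, by omega⟩
  push_cast
  omega

lemma fz_min {β' : Fin n → ℕ} (hsupp : ∀ l, β' l = 0 ↔ α l = 0)
    (hDom' : ∀ k t, 1 ≤ t → cntIn γ 0 k t ≤ cntIn β' 0 k t)
    {k t : ℕ} (hk : k ≤ n) (ht : 1 ≤ t) : fz α γ k t ≤ (cntIn β' 0 k t : ℤ) := by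
  refine fz_le α γ hk fun k' hk1 hk2 => ?_
  have ha : cntIn γ 0 k' t ≤ cntIn β' 0 k' t := hDom' k' t ht
  have hb : cntIn β' 0 k' t = cntIn β' 0 k t + cntIn β' k k' t := cntIn_split β' (Nat.zero_le _) hk1 t
  have hc : cntIn β' k k' t ≤ cntIn α k k' 1 := by
    refine cntIn_mono_comp fun l h1 h2 h3 => ⟨h1, h2, ?_⟩
    have : β' l ≠ 0 := by omega
    have := (hsupp l).not.1 this
    omega
  push_cast
  omega

lemma fz_one (hEq1 : cntIn α 0 n 1 = cntIn γ 0 n 1)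
    (hDom : ∀ k t, 1 ≤ t → cntIn γ 0 k t ≤ cntIn α 0 k t)
    {k : ℕ} (hk : k ≤ n) : fz α γ k 1 = (cntIn α 0 k 1 : ℤ) := by
  have h1 : (cntIn α 0 k 1 : ℤ) ≤ fz α γ k 1 := by
    have := fz_ge α γ hk (le_refl n) 1
    have hsp : cntIn α 0 n 1 = cntIn α 0 k 1 + cntIn α k n 1 := cntIn_split α (Nat.zero_le _) hk 1
    rw [← hEq1] at this
    push_cast [hsp] at this
    omega
  have h2 : fz α γ k 1 ≤ (cntIn α 0 k 1 : ℤ) := by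
    refine fz_le α γ hk fun k' hk1 hk2 => ?_
    have ha : cntIn γ 0 k' 1 ≤ cntIn α 0 k' 1 := hDom k' 1 le_rfl
    have hb : cntIn α 0 k' 1 = cntIn α 0 k 1 + cntIn α k k' 1 := cntIn_split α (Nat.zero_le _) hk1 1
    push_cast
    omega
  omega

lemma fz_big {t : ℕ} (hT : ∀ l : Fin n, γ l < t) {k : ℕ} (hk : k ≤ n) :
    fz α γ k t = 0 := by
  have hc : ∀ k', cntIn γ 0 k' t = 0 := by
    intro k'
    refine Finset.sum_eq_zero fun l _ => ?_
    have := hT l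
    split_ifs <;> omega
  have h1 := fz_ge_c α γ hk t
  rw [hc k] at h1
  have h2 : fz α γ k t ≤ 0 := by
    refine fz_le α γ hk fun k' hk1 hk2 => ?_
    rw [hc k']
    push_cast
    omega
  omega

end FZ2

/-- the maximal element. -/
def bhat (α γ : Fin n → ℕ) : Fin n → ℕ := fun i =>
  ((Finset.Icc 1 (univ.sup γ)).filter fun t =>
    fz α γ (i : ℕ) t < fz α γ ((i : ℕ)+1) t).card

section BH
variable (α γ : Fin n → ℕ)

lemma fz_dichotomy (i : Fin n) (t : ℕ) :
    fz α γ ((i:ℕ)+1) t = fz α γ (i:ℕ) t ∨ fz α γ ((i:ℕ)+1) t = fz α γ (i:ℕ) t + 1 := by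
  have h1 := fz_mono α γ i.isLt t
  have h2 := fz_step_le_one α γ i.isLt t
  omega

lemma incr_iff (i : Fin n) {t : ℕ} (ht : 1 ≤ t) :
    t ≤ bhat α γ i ↔ fz α γ ((i:ℕ)+1) t = fz α γ (i:ℕ) t + 1 := by
  classical
  set T := univ.sup γ with hTdef
  set A := (Finset.Icc 1 T).filter (fun u =>
    fz α γ (i : ℕ) u < fz α γ ((i : ℕ)+1) u) with hAdef
  have hTl : ∀ u, T < u → ∀ l : Fin n, γ l < u := by
    intro u hu l
    have : γ l ≤ T := Finset.le_sup (mem_univ l)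
    omega
  have hbig : ∀ u, T < u → ¬ (fz α γ ((i:ℕ)+1) u = fz α γ (i:ℕ) u + 1) := by
    intro u hu hcon
    rw [fz_big α γ (hTl u hu) (by omega : (i:ℕ)+1 ≤ n),
      fz_big α γ (hTl u hu) (by omega : (i:ℕ) ≤ n)] at hcon
    omega
  have hcard : bhat α γ i = A.card := rfl
  by_cases hA : A.Nonempty
  · set m := A.max' hA with hmdef
    have hmA : m ∈ A := A.max'_mem hA
    have hmIcc := (Finset.mem_filter.1 hmA).1
    have hmjump : fz α γ ((i:ℕ)+1) m = fz α γ (i:ℕ) m + 1 := by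
      have := (Finset.mem_filter.1 hmA).2
      rcases fz_dichotomy α γ i m with h | h <;> omega
    have hsub2 : ∀ u, 1 ≤ u → u ≤ m → u ∈ A := by
      intro u hu1 hu2
      refine Finset.mem_filter.2 ⟨Finset.mem_Icc.2 ⟨hu1, ?_⟩, ?_⟩
      · have := Finset.mem_Icc.1 hmIcc
        omega
      · have := fz_dc α γ i.isLt hu2 hmjump
        omega
    have hAeq : A = Finset.Icc 1 m := by
      apply Finset.Subset.antisymm
      · intro u hu
        exact Finset.mem_Icc.2 ⟨(Finset.mem_Icc.1 (Finset.mem_filter.1 hu).1).1, A.le_max' u hu⟩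
      · intro u hu
        exact hsub2 u (Finset.mem_Icc.1 hu).1 (Finset.mem_Icc.1 hu).2
    have hm1 : 1 ≤ m := (Finset.mem_Icc.1 hmIcc).1
    have hcardm : A.card = m := by rw [hAeq, Nat.card_Icc]; omega
    rw [hcard, hcardm]
    constructor
    · intro htm
      have := (Finset.mem_filter.1 (hsub2 t ht htm)).2
      rcases fz_dichotomy α γ i t with h | h <;> omega
    · intro heq
      have htT : t ≤ T := by
        by_contra hcon
        exact hbig t (by omega) heq
      have : t ∈ A := Finset.mem_filter.2 ⟨Finset.mem_Icc.2 ⟨ht, htT⟩, by omega⟩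
      rw [hAeq] at this
      exact (Finset.mem_Icc.1 this).2
  · rw [Finset.not_nonempty_iff_eq_empty] at hA
    rw [hcard, hA]
    simp only [Finset.card_empty]
    constructor
    · omega
    · intro heq
      have htT : t ≤ T := by
        by_contra hcon
        exact hbig t (by omega) heq
      have : t ∈ A := Finset.mem_filter.2 ⟨Finset.mem_Icc.2 ⟨ht, htT⟩, by omega⟩
      rw [hA] at this
      simp at this
end BH


variable {n : ℕ}

section BH2
variable (α γ : Fin n → ℕ)
variable (hEq : ∀ t, 1 ≤ t → cntIn α 0 n t = cntIn γ 0 n t)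
variable (hDom : ∀ k t, 1 ≤ t → cntIn γ 0 k t ≤ cntIn α 0 k t)

include hEq hDom in
lemma cnt_bh : ∀ k, k ≤ n → ∀ t, 1 ≤ t → (cntIn (bhat α γ) 0 k t : ℤ) = fz α γ k t := by
  intro k
  induction k with
  | zero =>
      intro _ t ht
      rw [cntIn_eq_zero (bhat α γ) (le_refl 0) t, fz_zero α γ hDom ht]
      simp
  | succ k IH =>
      intro hk t ht
      have hkn : k < n := by omega
      have hsucc := cnt_succ (bhat α γ) ⟨k, hkn⟩ t
      simp only [Fin.val_mk] at hsucc
      have hIH := IH (by omega) t ht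
      by_cases hjump : t ≤ bhat α γ ⟨k, hkn⟩
      · have heq := (incr_iff α γ ⟨k, hkn⟩ ht).1 hjump
        simp only [Fin.val_mk] at heq
        rw [if_pos hjump] at hsucc
        push_cast [hsucc]
        omega
      · have hnjump : ¬ (fz α γ (k+1) t = fz α γ k t + 1) := by
          intro hcon
          exact hjump ((incr_iff α γ ⟨k, hkn⟩ ht).2 (by simpa using hcon))
        have hdich := fz_dichotomy α γ ⟨k, hkn⟩ t
        simp only [Fin.val_mk] at hdich
        have heq : fz α γ (k+1) t = fz α γ k t := by
          rcases hdich with h | h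
          · exact h
          · exact absurd h hnjump
        rw [if_neg hjump] at hsucc
        push_cast [hsucc]
        omega

include hEq hDom in
lemma supp_bh : ∀ i : Fin n, bhat α γ i = 0 ↔ α i = 0 := by
  intro i
  have hone : ∀ m : ℕ, m ≤ n → fz α γ m 1 = (cntIn α 0 m 1 : ℤ) :=
    fun m hm => fz_one α γ (hEq 1 le_rfl) hDom hm
  have hsucc := cnt_succ α i 1
  have h1 : 1 ≤ bhat α γ i ↔ fz α γ ((i:ℕ)+1) 1 = fz α γ (i:ℕ) 1 + 1 :=
    incr_iff α γ i le_rfl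
  rw [hone _ (by omega : (i:ℕ)+1 ≤ n), hone _ (by omega : (i:ℕ) ≤ n)] at h1
  constructor
  · intro h0
    by_contra hcon
    have : 1 ≤ α i := by omega
    rw [if_pos this] at hsucc
    have : 1 ≤ bhat α γ i := by
      rw [h1]
      push_cast [hsucc]
      ring
    omega
  · intro h0
    by_contra hcon
    have hb1 : 1 ≤ bhat α γ i := by omega
    have := h1.1 hb1
    rw [if_neg (by omega)] at hsucc
    rw [hsucc] at this
    push_cast at this
    omega

end BH2

/-- Main existence: everything about `bhat`. -/
theorem bhat_spec (α γ : Fin n → ℕ)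
    (hEq : ∀ t, 1 ≤ t → cntIn α 0 n t = cntIn γ 0 n t)
    (hDom : ∀ k t, 1 ≤ t → cntIn γ 0 k t ≤ cntIn α 0 k t) :
    PinnedSwapLE α (bhat α γ) ∧ LSwapLE (bhat α γ) γ ∧
      ∀ β' : Fin n → ℕ, PinnedSwapLE α β' → LSwapLE β' γ → LSwapLE β' (bhat α γ) := by
  have key : ∀ k t, k ≤ n → 1 ≤ t → (cntIn (bhat α γ) 0 k t : ℤ) = fz α γ k t :=
    fun k t hk ht => cnt_bh α γ hEq hDom k hk t ht
  -- counts of bhat at n agree with γ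
  have hEqb : ∀ t, 1 ≤ t → cntIn (bhat α γ) 0 n t = cntIn γ 0 n t := by
    intro t ht
    have := key n t le_rfl ht
    rw [fz_n α γ t] at this
    exact_mod_cast this
  -- dominance γ ≤ bhat
  have hDomb : ∀ k t, 1 ≤ t → cntIn γ 0 k t ≤ cntIn (bhat α γ) 0 k t := by
    intro k t ht
    rcases le_or_gt k n with hk | hk
    · have h1 := key k t hk ht
      have h2 := fz_ge_c α γ hk t
      omega
    · rw [cntIn_stable γ (by omega) t, cntIn_stable (bhat α γ) (by omega) t]
      have h1 := key n t le_rfl ht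
      have h2 := fz_ge_c α γ (le_refl n) t
      omega
  -- dominance bhat ≤ α
  have hDomab : ∀ k t, 1 ≤ t → cntIn (bhat α γ) 0 k t ≤ cntIn α 0 k t := by
    intro k t ht
    rcases le_or_gt k n with hk | hk
    · have h1 := key k t hk ht
      have h2 := fz_le_alpha α γ hDom hk ht
      omega
    · rw [cntIn_stable α (by omega) t, cntIn_stable (bhat α γ) (by omega) t]
      have h1 := key n t le_rfl ht
      have h2 := fz_le_alpha α γ hDom (le_refl n) ht
      omega
  have hsupp := supp_bh α γ hEq hDom
  refine ⟨?_, ?_, ?_⟩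
  · -- PinnedSwapLE α bhat
    refine suffP ?_ ?_ ?_
    · intro t ht
      rw [hEqb t ht, hEq t ht]
    · exact hDomab
    · intro l
      exact (hsupp l).symm
  · -- LSwapLE bhat γ
    exact suffL hEqb hDomb
  · -- maximality
    intro β' hpin hls
    have hls' : LSwapLE α β' := pinned_le_lswaple hpin
    have hEq1 : ∀ t, cntIn β' 0 n t = cntIn α 0 n t := lswaple_eqc hls'
    have hsupp' : ∀ l, β' l = 0 ↔ α l = 0 := fun l => ((pinned_le_supp hpin) l).symm
    have hDom' : ∀ k t, cntIn γ 0 k t ≤ cntIn β' 0 k t := lswaple_dom hls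
    refine suffL ?_ ?_
    · intro t ht
      rw [hEq1 t, hEq t ht, ← hEqb t ht]
    · intro k t ht
      rcases le_or_gt k n with hk | hk
      · have h1 := key k t hk ht
        have h2 := fz_min α γ hsupp' (fun k t ht => hDom' k t) hk ht
        omega
      · rw [cntIn_stable β' (by omega) t, cntIn_stable (bhat α γ) (by omega) t]
        have h1 := key n t le_rfl ht
        have h2 := fz_min α γ hsupp' (fun k t ht => hDom' k t) (le_refl n) ht
        omega


end MaxPinned


theorem exists_unique_maximal_pinned {n : ℕ} (α γ : Fin n → ℕ)
    (h : LSwapLE α γ) :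
    ∃! β : Fin n → ℕ, PinnedSwapLE α β ∧ LSwapLE β γ ∧
      ∀ β' : Fin n → ℕ, PinnedSwapLE α β' → LSwapLE β' γ → LSwapLE β' β := by
  open MaxPinned in
  have hEq : ∀ t, 1 ≤ t → cntIn α 0 n t = cntIn γ 0 n t := fun t _ => (lswaple_eqc h t).symm
  have hDom : ∀ k t, 1 ≤ t → cntIn γ 0 k t ≤ cntIn α 0 k t := fun k t _ => lswaple_dom h k t
  obtain ⟨h1, h2, h3⟩ := bhat_spec α γ hEq hDom
  refine ⟨bhat α γ, ⟨h1, h2, h3⟩, ?_⟩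
  rintro β' ⟨g1, g2, g3⟩
  have ha : LSwapLE β' (bhat α γ) := h3 β' g1 g2
  have hb : LSwapLE (bhat α γ) β' := g3 (bhat α γ) h1 h2
  exact lswaple_antisymm ha hb
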